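/- Let a and b be coprime positive integers. For every (b,-a)-Dyck partition π ∈ D_{b,-a}(a,b), mkwd(G_{b,a}(π)) = sw⁺_{b,-a} ∘ rev (mkwd(π)), where G_{b,a} is the Gorsky–Mazin map. -/

import Mathlib

inductive Letter : Type
  | N : Letter
  | E : Letter
deriving DecidableEq, Repr

/-- weight of a letter: `N` has weight `r`, `E` has weight `s`. -/
def wt (r s : ℤ) : Letter → ℤ
  | Letter.N => r
  | Letter.E => s

/-- Pair each letter of the word with its `(r,s)`-level (east-north convention),
    starting from level `l`. -/
def lvls (r s : ℤ) : ℤ → List Letter → List (Letter × ℤ)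
  | _, [] => []
  | l, c :: w => (c, l + wt r s c) :: lvls r s (l + wt r s c) w

/-- Helper for `mkwd`: given the row lengths of the partition read from the bottom
    of the rectangle (weakly increasing list), produce the frontier word. -/
def stairs (b : ℕ) : ℕ → List ℕ → List Letter
  | prev, [] => List.replicate (b - prev) Letter.E
  | prev, q :: qs => List.replicate (q - prev) Letter.E ++ Letter.N :: stairs b q qs

/-- `mkwd a b π`: the word of the frontier lattice path (from `(0,0)` to `(b,a)`) of
    the partition `π` drawn in the `a×b` rectangle: the number of `E`'s before the
    `i`-th `N` is the `(a+1-i)`-th part of `π` (padded with zero parts to length `a`). -/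
def mkwd (a b : ℕ) (π : List ℕ) : List Letter :=
  stairs b 0 ((π ++ List.replicate (a - π.length) 0).reverse)

/-- The `i`-th part of `π` (1-based), zero beyond the length of `π`. -/
def part (π : List ℕ) (i : ℕ) : ℕ := π.getD (i - 1) 0

/-- The `(b,-a)`-level of the lattice square `[x,x+1]×[y,y+1]`, i.e. of its
    southeast corner `(x+1, y)`. -/
def sqLevel (a b : ℕ) (x y : ℕ) : ℤ := (b : ℤ) * y - (a : ℤ) * (x + 1)

/-- The set of `(b,-a)`-levels of the lattice squares lying above the line `by = ax`
    and below `mkpath(π)` (the square `(x,y)` lies below the path iff `x ≥ part π (a-y)`,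
    and strictly above the line iff its level is positive). -/
def lvlSet (a b : ℕ) (π : List ℕ) : Finset ℤ :=
  ((Finset.range b ×ˢ Finset.range a).filter
    (fun p => part π (a - p.2) ≤ p.1 ∧ 0 < sqLevel a b p.1 p.2)).image
    (fun p => sqLevel a b p.1 p.2)

/-- `π` is a `(b,-a)`-Dyck partition: every step of `mkpath(π)` has nonnegative
    `(b,-a)`-level (east-north convention), i.e. the path stays weakly above `by = ax`. -/
def IsDyckPtn (a b : ℕ) (π : List ℕ) : Prop :=
  ∀ p ∈ lvls (b : ℤ) (-(a : ℤ)) 0 (mkwd a b π), 0 ≤ p.2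

/-- `π` is a partition contained in the `a×b` rectangle. -/
def IsPtnIn (a b : ℕ) (π : List ℕ) : Prop :=
  List.Pairwise (· ≥ ·) π ∧ π.length ≤ a ∧ ∀ p ∈ π, p ≤ b

/-- `posBefore k k' = true` iff level `k` is swept before (or equals) level `k'`
    in the positive sweep order `0, -1, -2, …` then `…, 3, 2, 1`. -/
def posBefore (k k' : ℤ) : Bool :=
  if k ≤ 0 then (if k' ≤ 0 then decide (k' ≤ k) else true)
  else (if k' ≤ 0 then false else decide (k' ≤ k))

/-- The positive sweep map `sw⁺_{r,s}`: levels are visited in the order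
    `0, -1, -2, …` then `…, 3, 2, 1`, each level scanned left-to-right
    (a stable sort of the word by the level order). -/
def sweepPos (r s : ℤ) (w : List Letter) : List Letter :=
  ((lvls r s 0 w).mergeSort (fun p q => posBefore p.2 q.2)).map Prod.fst

/-- The `b`-generators `β₁ < ⋯ < β_b` of `π`: the levels of the lattice squares
    immediately above `mkpath(π)`, i.e. the east-north levels of the east steps,
    listed in increasing order. -/
def bGens (a b : ℕ) (π : List ℕ) : List ℤ :=
  ((lvls (b : ℤ) (-(a : ℤ)) 0 (mkwd a b π)).filterMap
      (fun p => if p.1 = Letter.E then some p.2 else none)).mergeSort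
    (fun x y => decide (x ≤ y))

/-- `g_{b,a}(β) = |{β, β+1, …, β+a-1} ∩ Δᶜ|`, where `Δᶜ` is the set of levels of
    lattice squares between `mkpath(π)` and the line `by = ax`. -/
def gGM (a b : ℕ) (π : List ℕ) (β : ℤ) : ℕ :=
  (((Finset.range a).image (fun t : ℕ => β + (t : ℤ))).filter (fun x => x ∈ lvlSet a b π)).card

/-- The Gorsky–Mazin partition `G_{b,a}(π)`: the partition whose `i`-th column has
    length `g_{b,a}(βᵢ)`; its rows (the conjugate of the column lengths, discarding
    zero rows) are listed in decreasing order. -/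
def GMpart (a b : ℕ) (π : List ℕ) : List ℕ :=
  let cols := (bGens a b π).map (gGM a b π)
  ((List.range a).map (fun j => (cols.filter (fun c => decide (j + 1 ≤ c))).length)).filter
    (fun t => decide (0 < t))

/-- start-level pairs: each letter paired with the level *before* the step. -/
def startPairs (r s : ℤ) : ℤ → List Letter → List (Letter × ℤ)
  | _, [] => []
  | l, c :: w => (c, l) :: startPairs r s (l + wt r s c) w

def wsum (r s : ℤ) (w : List Letter) : ℤ := (w.map (wt r s)).sum

lemma wsum_cons (r s : ℤ) (c : Letter) (w : List Letter) :
    wsum r s (c :: w) = wt r s c + wsum r s w := by simp [wsum]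

lemma lvls_eq_map (r s : ℤ) (l : ℤ) (w : List Letter) :
    lvls r s l w = (startPairs r s l w).map (fun p => (p.1, p.2 + wt r s p.1)) := by
  induction w generalizing l with
  | nil => rfl
  | cons c w ih => simp [lvls, startPairs, ih]

lemma startPairs_fst (r s : ℤ) (l : ℤ) (w : List Letter) :
    (startPairs r s l w).map Prod.fst = w := by
  induction w generalizing l with
  | nil => rfl
  | cons c w ih => simp [startPairs, ih]

lemma startPairs_length (r s : ℤ) (l : ℤ) (w : List Letter) :
    (startPairs r s l w).length = w.length := by
  induction w generalizing l with
  | nil => rfl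
  | cons c w ih => simp [startPairs, ih]

lemma startPairs_shift (r s : ℤ) (l m : ℤ) (w : List Letter) :
    startPairs r s (l + m) w = (startPairs r s l w).map (fun p => (p.1, p.2 + m)) := by
  induction w generalizing l with
  | nil => rfl
  | cons c w ih =>
    simp only [startPairs, List.map_cons]
    congr 1
    rw [show l + m + wt r s c = (l + wt r s c) + m by ring, ih]

lemma startPairs_append (r s : ℤ) (l : ℤ) (u v : List Letter) :
    startPairs r s l (u ++ v) = startPairs r s l u ++ startPairs r s (l + wsum r s u) v := by
  induction u generalizing l with
  | nil => simp [startPairs, wsum]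
  | cons c u ih =>
    simp only [List.cons_append, startPairs, List.append_eq, wsum_cons]
    rw [ih, show l + (wt r s c + wsum r s u) = l + wt r s c + wsum r s u by ring]

lemma lvls_append (r s : ℤ) (l : ℤ) (u v : List Letter) :
    lvls r s l (u ++ v) = lvls r s l u ++ lvls r s (l + wsum r s u) v := by
  rw [lvls_eq_map, lvls_eq_map, lvls_eq_map, startPairs_append, List.map_append]

lemma wsum_reverse (r s : ℤ) (w : List Letter) : wsum r s w.reverse = wsum r s w := by
  simp [wsum, List.map_reverse, List.sum_reverse]

lemma lvls_reverse (r s : ℤ) (w : List Letter) :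
    lvls r s 0 w.reverse
      = ((startPairs r s 0 w).map (fun p => (p.1, wsum r s w - p.2))).reverse := by
  induction w with
  | nil => rfl
  | cons c w ih =>
    rw [List.reverse_cons, lvls_append, ih]
    simp only [startPairs, List.map_cons, List.reverse_cons, lvls, wsum_cons, wsum_reverse]
    congr 1
    · congr 1
      rw [show (0 : ℤ) + wt r s c = 0 + wt r s c by ring, startPairs_shift,
        List.map_map]
      apply List.map_congr_left
      intro p _
      simp
      ring
    · simp [lvls]
      ring

lemma startPairs_nonneg (r s : ℤ) : ∀ (l : ℤ) (w : List Letter),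
    (∀ p ∈ lvls r s l w, 0 ≤ p.2) → 0 ≤ l → ∀ p ∈ startPairs r s l w, 0 ≤ p.2
  | l, [], _, _ => by simp [startPairs]
  | l, c :: w, h, hl => by
    simp only [startPairs, List.mem_cons]
    rintro p (rfl | hp)
    · exact hl
    · exact startPairs_nonneg r s _ w (fun q hq => h q (by simp [lvls]; right; exact hq))
        (h (c, l + wt r s c) (by simp [lvls])) p hp

lemma startPairs_replicateE (r s : ℤ) (l : ℤ) (m : ℕ) :
    startPairs r s l (List.replicate m Letter.E)
      = (List.range m).map (fun j : ℕ => (Letter.E, l + s * (j:ℤ))) := by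
  induction m generalizing l with
  | zero => rfl
  | succ m ih =>
    rw [List.replicate_succ, List.range_succ_eq_map]
    simp only [startPairs, List.map_cons, List.map_map]
    congr 1
    · simp
    · rw [show wt r s Letter.E = s from rfl, ih]
      apply List.map_congr_left
      intro j _
      simp only [Function.comp_apply, Prod.mk.injEq, true_and]
      push_cast
      ring

lemma wsum_replicateE (r s : ℤ) (m : ℕ) :
    wsum r s (List.replicate m Letter.E) = s * m := by
  simp [wsum, List.map_replicate, List.sum_replicate, wt]
  ring

/-- N-pairs of a staircase, recursively. -/
def npairs (a b : ℕ) : ℕ → List ℕ → List (Letter × ℤ)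
  | _, [] => []
  | y, q :: qs => (Letter.N, (b:ℤ)*(y:ℤ) - (a:ℤ)*(q:ℤ)) :: npairs a b (y+1) qs

/-- E-pairs of a staircase, recursively. -/
def epairs (a b : ℕ) : ℕ → ℕ → List ℕ → List (Letter × ℤ)
  | xprev, y, [] => (List.range' xprev (b - xprev)).map
      (fun x : ℕ => (Letter.E, (b:ℤ)*(y:ℤ) - (a:ℤ)*(x:ℤ)))
  | xprev, y, q :: qs => ((List.range' xprev (q - xprev)).map
      (fun x : ℕ => (Letter.E, (b:ℤ)*(y:ℤ) - (a:ℤ)*(x:ℤ)))) ++ epairs a b q (y+1) qs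

lemma stairs_startPairs_perm (a b : ℕ) : ∀ (qs : List ℕ) (xprev y : ℕ),
    qs.Pairwise (· ≤ ·) → (∀ q ∈ qs, xprev ≤ q) →
    (startPairs (b:ℤ) (-(a:ℤ)) ((b:ℤ)*(y:ℤ) - (a:ℤ)*(xprev:ℤ)) (stairs b xprev qs)).Perm
      (npairs a b y qs ++ epairs a b xprev y qs)
  | [], xprev, y, _, _ => by
    rw [stairs, startPairs_replicateE, npairs, epairs]
    apply List.Perm.of_eq
    rw [List.nil_append, List.range'_eq_map_range, List.map_map]
    apply List.map_congr_left
    intro j _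
    simp only [Function.comp_apply, Prod.mk.injEq, true_and]
    push_cast
    ring
  | q :: qs, xprev, y, hmono, hlo => by
    have hxq : xprev ≤ q := hlo q List.mem_cons_self
    have ih := stairs_startPairs_perm a b qs q (y + 1) (List.pairwise_cons.mp hmono).2
      (List.pairwise_cons.mp hmono).1
    rw [stairs, startPairs_append, startPairs_replicateE, wsum_replicateE]
    have hl' : (b:ℤ)*(y:ℤ) - (a:ℤ)*(xprev:ℤ) + (-(a:ℤ)) * ((q - xprev : ℕ):ℤ)
        = (b:ℤ)*(y:ℤ) - (a:ℤ)*(q:ℤ) := by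
      rw [Nat.cast_sub hxq]; ring
    rw [hl']
    show (_ ++ ((Letter.N, (b:ℤ)*(y:ℤ) - (a:ℤ)*(q:ℤ)) ::
      startPairs _ _ ((b:ℤ)*(y:ℤ) - (a:ℤ)*(q:ℤ) + wt (b:ℤ) (-(a:ℤ)) Letter.N) _)).Perm _
    have hw : (b:ℤ)*(y:ℤ) - (a:ℤ)*(q:ℤ) + wt (b:ℤ) (-(a:ℤ)) Letter.N
        = (b:ℤ)*((y+1 : ℕ):ℤ) - (a:ℤ)*(q:ℤ) := by
      show _ + (b:ℤ) = _
      push_cast; ring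
    rw [hw]
    have hE1 : (List.range (q - xprev)).map
        (fun j : ℕ => (Letter.E, (b:ℤ)*(y:ℤ) - (a:ℤ)*(xprev:ℤ) + (-(a:ℤ)) * (j:ℤ)))
        = (List.range' xprev (q - xprev)).map
          (fun x : ℕ => (Letter.E, (b:ℤ)*(y:ℤ) - (a:ℤ)*(x:ℤ))) := by
      rw [List.range'_eq_map_range, List.map_map]
      apply List.map_congr_left
      intro j _
      simp only [Function.comp_apply, Prod.mk.injEq, true_and]
      push_cast
      ring
    rw [hE1, npairs, epairs]
    refine ((List.Perm.append_left _ (List.Perm.cons _ ih)).trans List.perm_middle).trans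
      (List.Perm.cons _ ?_)
    have h3 := List.Perm.append_right (epairs a b q (y+1) qs)
      (List.perm_append_comm
        (l₁ := (List.range' xprev (q - xprev)).map
          (fun x : ℕ => (Letter.E, (b:ℤ)*(y:ℤ) - (a:ℤ)*(x:ℤ))))
        (l₂ := npairs a b (y+1) qs))
    simpa [List.append_assoc] using h3

lemma npairs_eq (a b : ℕ) : ∀ (qs : List ℕ) (y : ℕ),
    npairs a b y qs = (List.range qs.length).map
      (fun i : ℕ => (Letter.N, (b:ℤ)*((y:ℤ)+(i:ℤ)) - (a:ℤ)*((qs.getD i 0 : ℕ):ℤ)))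
  | [], y => rfl
  | q :: qs, y => by
    rw [npairs, npairs_eq a b qs (y+1)]
    rw [List.length_cons, List.range_succ_eq_map, List.map_cons, List.map_map]
    refine congrArg₂ List.cons (by simp) ?_
    apply List.map_congr_left
    intro i _
    simp only [Function.comp_apply, List.getD_cons_succ, Prod.mk.injEq, true_and]
    push_cast
    ring

lemma epairs_eq (a b : ℕ) : ∀ (qs : List ℕ) (xprev y : ℕ),
    qs.Pairwise (· ≤ ·) → (∀ q ∈ qs, xprev ≤ q) → (∀ q ∈ qs, q ≤ b) → xprev ≤ b →
    epairs a b xprev y qs = (List.range' xprev (b - xprev)).map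
      (fun x : ℕ => (Letter.E,
        (b:ℤ)*((y:ℤ)+(((qs.filter (fun q => decide (q ≤ x))).length : ℕ):ℤ)) - (a:ℤ)*(x:ℤ)))
  | [], xprev, y, _, _, _, _ => by
    rw [epairs]
    apply List.map_congr_left
    intro x _
    simp
  | q :: qs, xprev, y, hmono, hlo, hhi, hxb => by
    have hxq : xprev ≤ q := hlo q List.mem_cons_self
    have hqb : q ≤ b := hhi q List.mem_cons_self
    have hqlo : ∀ q' ∈ qs, q ≤ q' := (List.pairwise_cons.mp hmono).1
    rw [epairs, epairs_eq a b qs q (y+1) (List.pairwise_cons.mp hmono).2 hqlo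
      (fun e he => hhi e (List.mem_cons_of_mem _ he)) hqb]
    rw [show b - xprev = (q - xprev) + (b - q) from by omega,
      ← List.range'_append (s := xprev) (m := q - xprev) (n := b - q) (step := 1),
      show xprev + 1 * (q - xprev) = q from by omega, List.map_append]
    congr 1
    · apply List.map_congr_left
      intro x hx
      have hxlt : x < q := by
        rcases List.mem_range'_1.mp hx with ⟨_, h2⟩
        omega
      have hfil : (q :: qs).filter (fun q' => decide (q' ≤ x)) = [] := by
        rw [List.filter_eq_nil_iff]
        intro e he
        rcases List.mem_cons.mp he with rfl | he'
        · simpa using by omega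
        · have := hqlo e he'
          simpa using by omega
      rw [hfil]
      simp
    · apply List.map_congr_left
      intro x hx
      have hqx : q ≤ x := (List.mem_range'_1.mp hx).1
      have hfil : (q :: qs).filter (fun q' => decide (q' ≤ x))
          = q :: qs.filter (fun q' => decide (q' ≤ x)) :=
        List.filter_cons_of_pos (by simpa using hqx)
      rw [hfil]
      simp only [List.length_cons, Prod.mk.injEq, true_and]
      push_cast
      ring

lemma getD_replicate_self (c : Letter) : ∀ (m k : ℕ), (List.replicate m c).getD k c = c
  | 0, k => by simp [List.replicate]
  | m + 1, 0 => by simp [List.replicate_succ]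
  | m + 1, k + 1 => by
    rw [List.replicate_succ]
    simpa using getD_replicate_self c m k

lemma stairs_length (b : ℕ) : ∀ (qs : List ℕ) (xprev : ℕ),
    qs.Pairwise (· ≤ ·) → (∀ q ∈ qs, xprev ≤ q) → (∀ q ∈ qs, q ≤ b) → xprev ≤ b →
    (stairs b xprev qs).length = (b - xprev) + qs.length
  | [], xprev, _, _, _, hxb => by simp [stairs]
  | q :: qs, xprev, hmono, hlo, hhi, hxb => by
    have hxq : xprev ≤ q := hlo q List.mem_cons_self
    have hqb : q ≤ b := hhi q List.mem_cons_self
    rw [stairs]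
    simp only [List.length_append, List.length_replicate, List.length_cons]
    rw [stairs_length b qs q (List.pairwise_cons.mp hmono).2 (List.pairwise_cons.mp hmono).1
      (fun e he => hhi e (List.mem_cons_of_mem _ he)) hqb]
    omega

lemma stairs_getD (b : ℕ) : ∀ (qs : List ℕ) (xprev k : ℕ),
    qs.Pairwise (· ≤ ·) → (∀ q ∈ qs, xprev ≤ q) →
    ((stairs b xprev qs).getD k Letter.E = Letter.N ↔
      ∃ i < qs.length, k + xprev = qs.getD i 0 + i)
  | [], xprev, k, _, _ => by
    rw [stairs, getD_replicate_self]
    simp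
  | q :: qs, xprev, k, hmono, hlo => by
    have hxq : xprev ≤ q := hlo q List.mem_cons_self
    have hqlo : ∀ q' ∈ qs, q ≤ q' := (List.pairwise_cons.mp hmono).1
    have hall : ∀ i, i < qs.length → q ≤ qs.getD i 0 := by
      intro i hi
      rw [List.getD_eq_getElem _ _ hi]
      exact hqlo _ (List.getElem_mem _)
    rw [stairs]
    rcases lt_trichotomy k (q - xprev) with hk | hk | hk
    · rw [List.getD_append _ _ _ _ (by simpa using hk), getD_replicate_self]
      simp only [List.length_cons]
      constructor
      · intro h; exact absurd h (by simp)
      · rintro ⟨i, hi, heq⟩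
        exfalso
        rcases i with _ | i
        · simp only [List.getD_cons_zero] at heq; omega
        · simp only [List.getD_cons_succ] at heq
          have := hall i (by omega)
          omega
    · subst hk
      have hlen : (List.replicate (q - xprev) Letter.E).length = q - xprev := by simp
      rw [List.getD_append_right _ _ _ _ (by omega), hlen, Nat.sub_self,
        List.getD_cons_zero]
      simp only [List.length_cons]
      exact ⟨fun _ => ⟨0, by omega, by simp only [List.getD_cons_zero]; omega⟩, fun _ => trivial⟩
    · have hlen : (List.replicate (q - xprev) Letter.E).length = q - xprev := by simp
      rw [List.getD_append_right _ _ _ _ (by omega), hlen]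
      have hk1 : k - (q - xprev) = (k - (q - xprev) - 1) + 1 := by omega
      rw [hk1, List.getD_cons_succ]
      rw [stairs_getD b qs q (k - (q - xprev) - 1) (List.pairwise_cons.mp hmono).2 hqlo]
      constructor
      · rintro ⟨i, hi, heq⟩
        refine ⟨i + 1, by simpa using by omega, ?_⟩
        simp only [List.getD_cons_succ]
        omega
      · rintro ⟨i, hi, heq⟩
        rcases i with _ | i
        · simp only [List.getD_cons_zero] at heq
          omega
        · simp only [List.getD_cons_succ] at heq
          simp only [List.length_cons] at hi
          exact ⟨i, by omega, by omega⟩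

def Qlist (a : ℕ) (π : List ℕ) : List ℕ := (π ++ List.replicate (a - π.length) 0).reverse

def qv (a : ℕ) (π : List ℕ) (i : ℕ) : ℕ := (Qlist a π).getD i 0

def hv (a : ℕ) (π : List ℕ) (x : ℕ) : ℕ :=
  ((Qlist a π).filter (fun q => decide (q ≤ x))).length

def nv (a b : ℕ) (π : List ℕ) (y : ℕ) : ℤ := (b:ℤ)*(y:ℤ) - (a:ℤ)*((qv a π y : ℕ):ℤ)

def ev (a b : ℕ) (π : List ℕ) (x : ℕ) : ℤ := (b:ℤ)*((hv a π x : ℕ):ℤ) - (a:ℤ)*(x:ℤ)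

def PL (a b : ℕ) (π : List ℕ) : List (Letter × ℤ) :=
  ((List.range a).map fun y : ℕ => (Letter.N, nv a b π y))
    ++ ((List.range b).map fun x : ℕ => (Letter.E, ev a b π x))

lemma mkwd_eq_stairs (a b : ℕ) (π : List ℕ) : mkwd a b π = stairs b 0 (Qlist a π) := rfl

section QL

variable {a b : ℕ} {π : List ℕ} (hπ : IsPtnIn a b π)

lemma Qlist_length (hπ : IsPtnIn a b π) : (Qlist a π).length = a := by
  have := hπ.2.1
  simp [Qlist]
  omega

lemma Qlist_pairwise (hπ : IsPtnIn a b π) : (Qlist a π).Pairwise (· ≤ ·) := by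
  rw [Qlist, List.pairwise_reverse]
  refine List.pairwise_append.mpr ⟨hπ.1, List.pairwise_replicate.mpr (Or.inr (le_refl 0)), ?_⟩
  intro p hp q hq
  rw [List.eq_of_mem_replicate hq]
  exact Nat.zero_le p

lemma Qlist_le_b (hπ : IsPtnIn a b π) : ∀ q ∈ Qlist a π, q ≤ b := by
  intro q hq
  rw [Qlist, List.mem_reverse, List.mem_append] at hq
  rcases hq with h | h
  · exact hπ.2.2 q h
  · rw [List.eq_of_mem_replicate h]
    exact Nat.zero_le b

lemma qv_le_b (hπ : IsPtnIn a b π) (i : ℕ) : qv a π i ≤ b := by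
  rw [qv]
  rcases lt_or_ge i (Qlist a π).length with h | h
  · rw [List.getD_eq_getElem _ _ h]
    exact Qlist_le_b hπ _ (List.getElem_mem _)
  · rw [List.getD_eq_default _ _ h]
    exact Nat.zero_le b

lemma qv_mono (hπ : IsPtnIn a b π) {i j : ℕ} (hij : i ≤ j) (hj : j < a) :
    qv a π i ≤ qv a π j := by
  rcases eq_or_lt_of_le hij with rfl | hij'
  · exact le_refl _
  · have hl := Qlist_length hπ
    rw [qv, qv, List.getD_eq_getElem _ _ (by omega), List.getD_eq_getElem _ _ (by omega)]
    exact List.pairwise_iff_getElem.mp (Qlist_pairwise hπ) i j (by omega) (by omega) hij'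

lemma hv_le_a (hπ : IsPtnIn a b π) (x : ℕ) : hv a π x ≤ a := by
  have h := List.length_filter_le (fun q => decide (q ≤ x)) (Qlist a π)
  rw [Qlist_length hπ] at h
  exact h

lemma hv_ge (hπ : IsPtnIn a b π) {y x : ℕ} (hy : y < a) (h : qv a π y ≤ x) :
    y + 1 ≤ hv a π x := by
  have hl := Qlist_length hπ
  have hsub : ((Qlist a π).take (y+1)).filter (fun q => decide (q ≤ x))
      = (Qlist a π).take (y+1) := by
    rw [List.filter_eq_self]
    intro e he
    obtain ⟨i, hi, rfl⟩ := List.mem_iff_getElem.mp he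
    rw [List.getElem_take]
    have hiy : i ≤ y := by
      have := List.length_take (i := y+1) (l := Qlist a π)
      omega
    have : qv a π i ≤ qv a π y := qv_mono hπ hiy hy
    rw [qv, List.getD_eq_getElem _ _ (by omega)] at this
    simpa using le_trans this h
  have hsl : (((Qlist a π).take (y+1)).filter (fun q => decide (q ≤ x))).Sublist
      ((Qlist a π).filter (fun q => decide (q ≤ x))) :=
    List.Sublist.filter _ (List.take_sublist _ _)
  have := hsl.length_le
  rw [hsub, List.length_take] at this
  rw [hv]
  omega

lemma getD_reverse' {α : Type*} (l : List α) (d : α) (i : ℕ) (h : i < l.length) :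
    l.reverse.getD i d = l.getD (l.length - 1 - i) d := by
  rw [List.getD_eq_getElem _ _ (by simpa using h), List.getD_eq_getElem _ _ (by omega),
    List.getElem_reverse]

lemma getD_replicate' {α : Type*} (c : α) : ∀ (m k : ℕ), (List.replicate m c).getD k c = c
  | 0, k => by simp [List.replicate]
  | m + 1, 0 => by simp [List.replicate_succ]
  | m + 1, k + 1 => by
    rw [List.replicate_succ]
    simpa using getD_replicate' c m k

lemma part_eq_qv (hπ : IsPtnIn a b π) {y : ℕ} (hy : y < a) :
    part π (a - y) = qv a π y := by
  have hla := hπ.2.1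
  rw [part, qv, Qlist, List.reverse_append, List.reverse_replicate]
  rcases lt_or_ge y (a - π.length) with h | h
  · rw [List.getD_append _ _ _ _ (by simpa using h), getD_replicate',
      List.getD_eq_default _ _ (by omega)]
  · rw [List.getD_append_right _ _ _ _ (by simpa using h), List.length_replicate,
      getD_reverse' _ _ _ (by omega)]
    congr 1
    omega

lemma SP_mkwd_perm (hπ : IsPtnIn a b π) :
    (startPairs (b:ℤ) (-(a:ℤ)) 0 (mkwd a b π)).Perm (PL a b π) := by
  have h0 : (0:ℤ) = (b:ℤ)*((0:ℕ):ℤ) - (a:ℤ)*((0:ℕ):ℤ) := by simp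
  rw [mkwd_eq_stairs, h0]
  refine (stairs_startPairs_perm a b (Qlist a π) 0 0 (Qlist_pairwise hπ)
    (fun q _ => Nat.zero_le q)).trans ?_
  rw [npairs_eq, epairs_eq a b _ 0 0 (Qlist_pairwise hπ) (fun q _ => Nat.zero_le q)
    (Qlist_le_b hπ) (Nat.zero_le b)]
  rw [Qlist_length hπ]
  apply List.Perm.of_eq
  rw [PL]
  congr 1
  · apply List.map_congr_left
    intro i _
    simp only [Prod.mk.injEq, true_and, nv, qv]
    push_cast
    ring
  · rw [Nat.sub_zero, show List.range' 0 b = List.range b from by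
      rw [List.range_eq_range']]
    apply List.map_congr_left
    intro x _
    simp only [Prod.mk.injEq, true_and, ev, hv]
    push_cast
    ring

end QL

section Dist

variable {a b : ℕ} {π : List ℕ}

lemma cop_cancel (ha : 0 < a) (hab : Nat.Coprime a b) {u v : ℤ}
    (h : (b:ℤ) * u = (a:ℤ) * v) (h1 : -(a:ℤ) < u) (h2 : u < a) : u = 0 ∧ v = 0 := by
  have hco : IsCoprime (a:ℤ) (b:ℤ) := Nat.isCoprime_iff_coprime.mpr hab
  have hdvd : (a:ℤ) ∣ u := hco.dvd_of_dvd_mul_left ⟨v, h.symm ▸ by ring⟩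
  obtain ⟨c, rfl⟩ := hdvd
  have ha' : (0:ℤ) < a := by exact_mod_cast ha
  have hc : c = 0 := by nlinarith
  subst hc
  simp only [mul_zero, true_and]
  have : (a:ℤ) * v = 0 := by rw [← h]; ring
  rcases mul_eq_zero.mp this with h' | h'
  · exact absurd h' (by positivity)
  · exact h'

lemma nv_inj (ha : 0 < a) (hab : Nat.Coprime a b) {y y' : ℕ}
    (hy : y < a) (hy' : y' < a) (h : nv a b π y = nv a b π y') : y = y' := by
  have h2 : (b:ℤ) * ((y:ℤ) - y') = (a:ℤ) * ((qv a π y : ℤ) - (qv a π y' : ℤ)) := by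
    rw [nv, nv] at h
    linarith [h]
  have := (cop_cancel ha hab h2 (by push_cast; omega) (by push_cast; omega)).1
  omega

lemma ev_inj (hb : 0 < b) (hab : Nat.Coprime a b) {x x' : ℕ}
    (hx : x < b) (hx' : x' < b) (h : ev a b π x = ev a b π x') : x = x' := by
  have h2 : (a:ℤ) * ((x:ℤ) - x') = (b:ℤ) * ((hv a π x : ℤ) - (hv a π x' : ℤ)) := by
    rw [ev, ev] at h
    linarith [h]
  have := (cop_cancel hb hab.symm h2 (by push_cast; omega) (by push_cast; omega)).1
  omega

lemma nv_ne_ev (ha : 0 < a) (hb : 0 < b) (hab : Nat.Coprime a b) (hπ : IsPtnIn a b π)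
    {y x : ℕ} (hy : y < a) (hx : x < b) : nv a b π y ≠ ev a b π x := by
  intro h
  have hha : hv a π x ≤ a := hv_le_a hπ x
  have h2 : (b:ℤ) * ((y:ℤ) - (hv a π x : ℤ))
      = (a:ℤ) * ((qv a π y : ℤ) - (x:ℤ)) := by
    rw [nv, ev] at h
    linarith [h]
  rcases eq_or_lt_of_le (show -(a:ℤ) ≤ (y:ℤ) - (hv a π x : ℤ) from by push_cast; omega)
    with hedge | hlt
  · -- y = 0, hv x = a; then x = qv y + b ≥ b, contradiction
    rw [← hedge] at h2
    have ha' : (a:ℤ) ≠ 0 := by positivity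
    have : (qv a π y : ℤ) - (x:ℤ) = -(b:ℤ) := by
      apply mul_left_cancel₀ ha'
      rw [← h2]; ring
    have hxval : (x:ℤ) = (qv a π y : ℤ) + b := by linarith
    have : x < b := hx
    omega
  · obtain ⟨hu, hv'⟩ := cop_cancel ha hab h2 hlt (by push_cast; omega)
    have hyh : y = hv a π x := by omega
    have hqx : qv a π y = x := by omega
    have := hv_ge hπ hy (le_of_eq hqx)
    omega

lemma PL_map_snd (a b : ℕ) (π : List ℕ) :
    (PL a b π).map Prod.snd
      = (List.range a).map (nv a b π) ++ (List.range b).map (ev a b π) := by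
  rw [PL, List.map_append, List.map_map, List.map_map]
  rfl

lemma PL_keys_nodup (ha : 0 < a) (hb : 0 < b) (hab : Nat.Coprime a b) (hπ : IsPtnIn a b π) :
    ((PL a b π).map Prod.snd).Nodup := by
  rw [PL_map_snd, List.nodup_append]
  refine ⟨?_, ?_, ?_⟩
  · exact List.Nodup.map_on
      (fun y hy y' hy' h => nv_inj ha hab (List.mem_range.mp hy) (List.mem_range.mp hy') h)
      (List.nodup_range (n := a))
  · exact List.Nodup.map_on
      (fun x hx x' hx' h => ev_inj hb hab (List.mem_range.mp hx) (List.mem_range.mp hx') h)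
      (List.nodup_range (n := b))
  · intro z hz w hz' hzw
    obtain ⟨y, hy, rfl⟩ := List.mem_map.mp hz
    obtain ⟨x, hx, hxe⟩ := List.mem_map.mp hz'
    exact nv_ne_ev ha hb hab hπ (List.mem_range.mp hy) (List.mem_range.mp hx) (hzw.trans hxe.symm)

lemma PL_nonneg (hπ : IsPtnIn a b π) (hD : IsDyckPtn a b π) :
    ∀ p ∈ PL a b π, 0 ≤ p.2 := by
  intro p hp
  have hmem : p ∈ startPairs (b:ℤ) (-(a:ℤ)) 0 (mkwd a b π) :=
    ((SP_mkwd_perm hπ).mem_iff).mpr hp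
  exact startPairs_nonneg _ _ _ _ hD (le_refl 0) p hmem

lemma nv_nonneg (hπ : IsPtnIn a b π) (hD : IsDyckPtn a b π) {y : ℕ} (hy : y < a) :
    0 ≤ nv a b π y :=
  PL_nonneg hπ hD (Letter.N, nv a b π y)
    (List.mem_append_left _ (List.mem_map.mpr ⟨y, List.mem_range.mpr hy, rfl⟩))

lemma ev_nonneg (hπ : IsPtnIn a b π) (hD : IsDyckPtn a b π) {x : ℕ} (hx : x < b) :
    0 ≤ ev a b π x :=
  PL_nonneg hπ hD (Letter.E, ev a b π x)
    (List.mem_append_right _ (List.mem_map.mpr ⟨x, List.mem_range.mpr hx, rfl⟩))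

lemma ev_sub_a_nonneg (hπ : IsPtnIn a b π) (hD : IsDyckPtn a b π) {x : ℕ} (hx : x < b) :
    0 ≤ ev a b π x - (a:ℤ) := by
  have hp : (Letter.E, ev a b π x) ∈ PL a b π :=
    List.mem_append_right _ (List.mem_map.mpr ⟨x, List.mem_range.mpr hx, rfl⟩)
  have hmem : (Letter.E, ev a b π x) ∈ startPairs (b:ℤ) (-(a:ℤ)) 0 (mkwd a b π) :=
    ((SP_mkwd_perm hπ).mem_iff).mpr hp
  have hlv : (Letter.E, ev a b π x + wt (b:ℤ) (-(a:ℤ)) Letter.E)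
      ∈ lvls (b:ℤ) (-(a:ℤ)) 0 (mkwd a b π) := by
    rw [lvls_eq_map]
    exact List.mem_map.mpr ⟨(Letter.E, ev a b π x), hmem, rfl⟩
  have := hD _ hlv
  simp only [wt] at this
  linarith [this]

end Dist

section Key

variable {a b : ℕ} {π : List ℕ}

lemma lvlSet_mem (hπ : IsPtnIn a b π) {v : ℤ} :
    v ∈ lvlSet a b π ↔ ∃ y < a, ∃ x < b, qv a π y ≤ x ∧ 0 < v ∧
      v = (b:ℤ)*(y:ℤ) - (a:ℤ)*((x:ℤ)+1) := by
  rw [lvlSet, Finset.mem_image]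
  constructor
  · rintro ⟨p, hp, rfl⟩
    rw [Finset.mem_filter, Finset.mem_product, Finset.mem_range, Finset.mem_range] at hp
    obtain ⟨⟨hx, hy⟩, hq, hpos⟩ := hp
    exact ⟨p.2, hy, p.1, hx, by rwa [part_eq_qv hπ hy] at hq, hpos, by rw [sqLevel]⟩
  · rintro ⟨y, hy, x, hx, hq, hpos, rfl⟩
    refine ⟨(x, y), ?_, by rw [sqLevel]⟩
    rw [Finset.mem_filter, Finset.mem_product, Finset.mem_range, Finset.mem_range]
    refine ⟨⟨hx, hy⟩, by rwa [part_eq_qv hπ hy], ?_⟩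
    rw [sqLevel]
    exact hpos

lemma gGM_eq_filter (a b : ℕ) (π : List ℕ) (β : ℤ) :
    gGM a b π β = ((Finset.range a).filter (fun t : ℕ => β + (t:ℤ) ∈ lvlSet a b π)).card := by
  rw [gGM, Finset.filter_image]
  apply Finset.card_image_of_injOn
  intro t _ t' _ h
  have h2 : β + (t:ℤ) = β + (t':ℤ) := h
  have : (t:ℤ) = (t':ℤ) := by linarith [h2]
  exact_mod_cast this

lemma key_g (ha : 0 < a) (hb : 0 < b) (hab : Nat.Coprime a b)
    (hπ : IsPtnIn a b π) (hD : IsDyckPtn a b π) {x : ℕ} (hx : x < b) :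
    gGM a b π (ev a b π x - (a:ℤ))
      = ((Finset.range a).filter (fun y => ev a b π x < nv a b π y)).card := by
  have ha' : (0:ℤ) < a := by exact_mod_cast ha
  set β := ev a b π x - (a:ℤ) with hβdef
  have hβ0 : 0 ≤ β := ev_sub_a_nonneg hπ hD hx
  rw [gGM_eq_filter]
  symm
  refine Finset.card_nbij (fun y : ℕ => (((b:ℤ)*(y:ℤ) - β) % (a:ℤ)).toNat) ?_ ?_ ?_
  · -- maps to
    intro y hy
    rw [Finset.mem_coe, Finset.mem_filter, Finset.mem_range] at hy
    obtain ⟨hya, hlt⟩ := hy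
    have hmod0 : 0 ≤ ((b:ℤ)*(y:ℤ) - β) % (a:ℤ) := Int.emod_nonneg _ (by positivity)
    have hmodlt : ((b:ℤ)*(y:ℤ) - β) % (a:ℤ) < a := Int.emod_lt_of_pos _ ha'
    set t : ℤ := ((b:ℤ)*(y:ℤ) - β) % (a:ℤ) with htdef
    set D : ℤ := ((b:ℤ)*(y:ℤ) - β) / (a:ℤ) with hDdef
    have hvt : β + t = (b:ℤ)*(y:ℤ) - (a:ℤ)*D := by
      rw [htdef, Int.emod_def, hDdef]
      ring
    have hM : β < nv a b π y - a := by
      rw [hβdef] at *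
      rw [nv] at hlt ⊢
      linarith [hlt]
    have hMval : nv a b π y - a = (b:ℤ)*(y:ℤ) - (a:ℤ)*((qv a π y : ℤ) + 1) := by
      rw [nv]; ring
    have hDq : (qv a π y : ℤ) + 1 ≤ D := by
      have h1 : (nv a b π y - a) - (β + t) = (a:ℤ)*(D - (qv a π y : ℤ) - 1) := by
        rw [hvt, hMval]; ring
      have h2 : (nv a b π y - a) - (β + t) > -(a:ℤ) := by linarith
      nlinarith
    have hvpos : 0 < β + t := by
      rcases lt_or_eq_of_le (show (0:ℤ) ≤ β + t from by linarith) with h | h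
      · exact h
      · exfalso
        have hβz : β = 0 := by linarith
        have htz : t = 0 := by linarith
        have hby : (b:ℤ)*(y:ℤ) = (a:ℤ)*D := by
          have := hvt
          rw [hβz, htz] at this
          linarith [this]
        have := cop_cancel ha hab hby (by push_cast; omega) (by exact_mod_cast hya)
        have hy0 : y = 0 := by exact_mod_cast this.1
        subst hy0
        have : nv a b π 0 ≤ 0 := by
          rw [nv]
          push_cast
          have : (0:ℤ) ≤ (a:ℤ)*(qv a π 0 : ℤ) := by positivity
          linarith
        rw [hβz] at hM
        linarith
    have hDb : D < b := by
      have h1 : (a:ℤ)*D = (b:ℤ)*(y:ℤ) - (β + t) := by linarith [hvt]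
      have h2 : (a:ℤ)*D < (b:ℤ)*(y:ℤ) := by linarith
      have h3 : (b:ℤ)*(y:ℤ) ≤ (b:ℤ)*((a:ℤ)-1) := by
        have : (y:ℤ) ≤ (a:ℤ)-1 := by push_cast; omega
        nlinarith
      nlinarith
    rw [Finset.mem_coe, Finset.mem_filter, Finset.mem_range]
    constructor
    · show (((b:ℤ)*(y:ℤ) - β) % (a:ℤ)).toNat < a
      omega
    · rw [lvlSet_mem hπ]
      refine ⟨y, hya, (D-1).toNat, by omega, by omega, ?_, ?_⟩
      · show 0 < β + (((b:ℤ)*(y:ℤ) - β) % (a:ℤ)).toNat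
        rw [Int.toNat_of_nonneg hmod0]
        exact hvpos
      · show β + (((b:ℤ)*(y:ℤ) - β) % (a:ℤ)).toNat = _
        rw [Int.toNat_of_nonneg hmod0, hvt]
        have : (((D-1).toNat : ℕ) : ℤ) = D - 1 := by omega
        rw [this]
        ring
  · -- inj on
    intro y hy y' hy' heq
    simp only [Finset.coe_filter, Set.mem_setOf_eq, Finset.mem_range] at hy hy'
    have hmod0 : 0 ≤ ((b:ℤ)*(y:ℤ) - β) % (a:ℤ) := Int.emod_nonneg _ (by positivity)
    have hmod0' : 0 ≤ ((b:ℤ)*(y':ℤ) - β) % (a:ℤ) := Int.emod_nonneg _ (by positivity)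
    have heq' : (((b:ℤ)*(y:ℤ) - β) % (a:ℤ)).toNat = (((b:ℤ)*(y':ℤ) - β) % (a:ℤ)).toNat := heq
    have hemod : ((b:ℤ)*(y:ℤ) - β) % (a:ℤ) = ((b:ℤ)*(y':ℤ) - β) % (a:ℤ) := by omega
    have hdvd : (a:ℤ) ∣ ((b:ℤ)*(y:ℤ) - β) - ((b:ℤ)*(y':ℤ) - β) :=
      Int.ModEq.dvd (Int.ModEq.symm hemod)
    obtain ⟨c, hc⟩ := hdvd
    have hbc : (b:ℤ)*((y:ℤ) - (y':ℤ)) = (a:ℤ)*c := by linarith [hc]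
    have := (cop_cancel ha hab hbc (by push_cast; omega) (by push_cast; omega)).1
    omega
  · -- surj on
    intro t ht
    simp only [Finset.coe_filter, Set.mem_setOf_eq, Finset.mem_range] at ht
    obtain ⟨hta, hmem⟩ := ht
    rw [lvlSet_mem hπ] at hmem
    obtain ⟨y', hy', x', hx', hqx', hpos, heq⟩ := hmem
    have hnv : ev a b π x < nv a b π y' := by
      have h1 : nv a b π y' - (a:ℤ) - β = (a:ℤ)*((x':ℤ) - (qv a π y' : ℤ)) + t := by
        rw [nv]
        have : β = (b:ℤ)*(y':ℤ) - (a:ℤ)*((x':ℤ)+1) - t := by linarith [heq]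
        rw [this]
        ring
      have h2 : (0:ℤ) ≤ (a:ℤ)*((x':ℤ) - (qv a π y' : ℤ)) := by
        have : (0:ℤ) ≤ (x':ℤ) - (qv a π y' : ℤ) := by push_cast; omega
        positivity
      have h3 : ev a b π x ≤ nv a b π y' := by
        rw [hβdef] at h1
        push_cast at h1 ⊢
        omega
      rcases lt_or_eq_of_le h3 with h | h
      · exact h
      · exact absurd h.symm (nv_ne_ev ha hb hab hπ hy' hx)
    refine ⟨y', ?_, ?_⟩
    · simp only [Finset.coe_filter, Set.mem_setOf_eq, Finset.mem_range]
      exact ⟨hy', hnv⟩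
    · show (((b:ℤ)*(y':ℤ) - β) % (a:ℤ)).toNat = t
      have : (b:ℤ)*(y':ℤ) - β = (t:ℤ) + (a:ℤ)*((x':ℤ)+1) := by linarith [heq]
      rw [this, Int.add_mul_emod_self_left, Int.emod_eq_of_lt (by positivity)
        (by exact_mod_cast hta)]
      omega

end Key

section Count

variable {a b : ℕ} {π : List ℕ}

lemma countP_range_card (n : ℕ) (p : ℕ → Prop) [DecidablePred p] :
    ((Finset.range n).filter p).card = (List.range n).countP (fun i => decide (p i)) := by
  rw [List.countP_eq_length_filter]
  rfl

set_option maxRecDepth 10000 in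
lemma countP_disj {α : Type*} (p q : α → Bool) :
    ∀ (l : List α), (∀ x ∈ l, ¬(p x = true ∧ q x = true)) →
    l.countP (fun x => p x || q x) = l.countP p + l.countP q
  | [], _ => by simp
  | xh :: xt, hex => by
    have ih := countP_disj p q xt (fun x hx => hex x (List.mem_cons_of_mem _ hx))
    have hh := hex xh List.mem_cons_self
    by_cases hp : p xh = true <;> by_cases hq : q xh = true
    · exact absurd ⟨hp, hq⟩ hh
    all_goals rw [Bool.not_eq_true] at *
    all_goals simp [List.countP_cons, ih, hp, hq]
    all_goals omega

def rkN (a b : ℕ) (π : List ℕ) (Y : ℕ) : ℕ :=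
  (List.range a).countP (fun y => decide (nv a b π y < nv a b π Y))

def cE (a b : ℕ) (π : List ℕ) (Y : ℕ) : ℕ :=
  (List.range b).countP (fun x => decide (ev a b π x < nv a b π Y))

def dN (a b : ℕ) (π : List ℕ) (x : ℕ) : ℕ :=
  (List.range a).countP (fun y => decide (ev a b π x < nv a b π y))

def uN (a b : ℕ) (π : List ℕ) (x : ℕ) : ℕ :=
  (List.range a).countP (fun y => decide (nv a b π y < ev a b π x))

lemma cnt_eq_one (ha : 0 < a) (hab : Nat.Coprime a b) {Y : ℕ} (hY : Y < a) :
    (List.range a).countP (fun y => decide (nv a b π y = nv a b π Y)) = 1 := by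
  rw [List.countP_eq_length_filter,
    List.filter_congr (q := fun y => decide (y = Y)) (fun y hy => by
      rcases List.mem_range.mp hy with hy'
      by_cases h : y = Y
      · subst h; simp
      · simp only [decide_eq_decide]
        constructor
        · intro heq; exact nv_inj ha hab hy' hY heq
        · intro heq; exact absurd heq h),
    ← List.countP_eq_length_filter]
  have : (List.range a).countP (fun y => decide (y = Y)) = List.count Y (List.range a) := by
    rw [List.count]
    apply List.countP_congr
    intro y _
    simp only [decide_eq_true_eq, beq_iff_eq]
  rw [this]
  exact List.count_eq_one_of_mem (List.nodup_range (n := a)) (List.mem_range.mpr hY)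

lemma cnt_le_eq (ha : 0 < a) (hab : Nat.Coprime a b) {Y : ℕ} (hY : Y < a) :
    (List.range a).countP (fun y => decide (nv a b π y ≤ nv a b π Y)) = rkN a b π Y + 1 := by
  have h1 : (List.range a).countP (fun y => decide (nv a b π y ≤ nv a b π Y))
      = (List.range a).countP (fun y =>
          decide (nv a b π y < nv a b π Y) || decide (nv a b π y = nv a b π Y)) := by
    apply List.countP_congr
    intro y _
    simp only [Bool.or_eq_true, decide_eq_true_eq]
    constructor
    · intro h; exact lt_or_eq_of_le h
    · intro h; rcases h with h | h
      · exact le_of_lt h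
      · exact le_of_eq h
  rw [h1, countP_disj _ _ _ (fun y _ h => by
      have h1 := of_decide_eq_true h.1
      have h2 := of_decide_eq_true h.2
      exact absurd h2 (ne_of_lt h1)),
    cnt_eq_one ha hab hY]
  rfl

lemma rkN_lt_a (ha : 0 < a) (hab : Nat.Coprime a b) {Y : ℕ} (hY : Y < a) :
    rkN a b π Y < a := by
  have h1 := cnt_le_eq (π := π) (b := b) ha hab hY
  have h2 := List.countP_le_length (l := List.range a)
    (p := fun y => decide (nv a b π y ≤ nv a b π Y))
  rw [List.length_range] at h2
  omega

lemma rkN_lt_of_lt (ha : 0 < a) (hab : Nat.Coprime a b) {Y Y' : ℕ}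
    (hY : Y < a) (hY' : Y' < a) (h : nv a b π Y < nv a b π Y') :
    rkN a b π Y < rkN a b π Y' := by
  have h1 := cnt_le_eq (π := π) (b := b) ha hab hY
  have h2 : (List.range a).countP (fun y => decide (nv a b π y ≤ nv a b π Y))
      ≤ rkN a b π Y' := by
    apply List.countP_mono_left
    intro y _ hy
    have := of_decide_eq_true hy
    exact decide_eq_true (lt_of_le_of_lt this h)
  omega

lemma rkN_surj (ha : 0 < a) (hab : Nat.Coprime a b) {i : ℕ} (hi : i < a) :
    ∃ Y < a, rkN a b π Y = i := by
  have hinj : Set.InjOn (rkN a b π) ↑(Finset.range a) := by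
    intro Y hY Y' hY' h
    rw [Finset.coe_range, Set.mem_Iio] at hY hY'
    by_contra hne
    rcases lt_trichotomy (nv a b π Y) (nv a b π Y') with hlt | heq | hlt
    · exact absurd h (ne_of_lt (rkN_lt_of_lt ha hab hY hY' hlt))
    · exact hne (nv_inj ha hab hY hY' heq)
    · exact absurd h.symm (ne_of_lt (rkN_lt_of_lt ha hab hY' hY hlt))
  have hsub : (Finset.range a).image (rkN a b π) ⊆ Finset.range a := by
    intro j hj
    obtain ⟨Y, hY, rfl⟩ := Finset.mem_image.mp hj
    exact Finset.mem_range.mpr (rkN_lt_a ha hab (Finset.mem_range.mp hY))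
  have hcard : ((Finset.range a).image (rkN a b π)).card = a := by
    rw [Finset.card_image_of_injOn hinj, Finset.card_range]
  have heq : (Finset.range a).image (rkN a b π) = Finset.range a :=
    Finset.eq_of_subset_of_card_le hsub (by rw [hcard, Finset.card_range])
  have : i ∈ (Finset.range a).image (rkN a b π) := by
    rw [heq]; exact Finset.mem_range.mpr hi
  obtain ⟨Y, hY, hYi⟩ := Finset.mem_image.mp this
  exact ⟨Y, Finset.mem_range.mp hY, hYi⟩

lemma dN_add_uN (ha : 0 < a) (hb : 0 < b) (hab : Nat.Coprime a b) (hπ : IsPtnIn a b π)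
    {x : ℕ} (hx : x < b) : dN a b π x + uN a b π x = a := by
  have h := List.length_eq_countP_add_countP (fun y => decide (ev a b π x < nv a b π y))
    (l := List.range a)
  rw [List.length_range] at h
  have h2 : (List.range a).countP
      (fun y => decide ¬(decide (ev a b π x < nv a b π y)) = true) = uN a b π x := by
    apply List.countP_congr
    intro y hy
    have hy' := List.mem_range.mp hy
    simp only [decide_eq_true_eq, decide_not, Bool.not_eq_true']
    rcases lt_trichotomy (nv a b π y) (ev a b π x) with h' | h' | h'
    · simp [h', not_lt_of_gt h', le_of_lt h']
    · exact absurd h' (nv_ne_ev ha hb hab hπ hy' hx)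
    · simp [h', not_lt_of_gt h', asymm h']
  rw [h2] at h
  have hd : dN a b π x
      = (List.range a).countP (fun y => decide (ev a b π x < nv a b π y)) := rfl
  omega

lemma match_count (ha : 0 < a) (hb : 0 < b) (hab : Nat.Coprime a b) (hπ : IsPtnIn a b π)
    {Y : ℕ} (hY : Y < a) :
    (List.range b).countP (fun x => decide (a - rkN a b π Y ≤ dN a b π x)) = cE a b π Y := by
  apply List.countP_congr
  intro x hx
  have hx' := List.mem_range.mp hx
  have hdu := dN_add_uN ha hb hab hπ hx'
  have hrk := rkN_lt_a (π := π) ha hab hY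
  show decide (a - rkN a b π Y ≤ dN a b π x) = true ↔ decide (ev a b π x < nv a b π Y) = true
  simp only [decide_eq_true_eq]
  constructor
  · intro h
    by_contra hne
    have hne' : nv a b π Y < ev a b π x := by
      rcases lt_trichotomy (ev a b π x) (nv a b π Y) with h' | h' | h'
      · exact absurd h' hne
      · exact absurd h'.symm (nv_ne_ev ha hb hab hπ hY hx')
      · exact h'
    have h2 : (List.range a).countP (fun y => decide (nv a b π y ≤ nv a b π Y))
        ≤ uN a b π x := by
      apply List.countP_mono_left
      intro y _ hy
      have := of_decide_eq_true hy
      exact decide_eq_true (lt_of_le_of_lt this hne')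
    have h3 := cnt_le_eq (π := π) (b := b) ha hab hY
    omega
  · intro h
    have h2 : uN a b π x ≤ rkN a b π Y := by
      apply List.countP_mono_left
      intro y _ hy
      have := of_decide_eq_true hy
      exact decide_eq_true (lt_trans this h)
    omega

end Count

section GMside

variable {a b : ℕ} {π : List ℕ}

lemma bGens_perm (hπ : IsPtnIn a b π) :
    (bGens a b π).Perm ((List.range b).map fun x : ℕ => ev a b π x - (a:ℤ)) := by
  rw [bGens]
  refine (List.mergeSort_perm _ _).trans ?_
  rw [lvls_eq_map, List.filterMap_map]
  refine (List.Perm.filterMap _ (SP_mkwd_perm hπ)).trans ?_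
  apply List.Perm.of_eq
  rw [PL, List.filterMap_append, List.filterMap_map, List.filterMap_map]
  have h1 : (List.range a).filterMap
      (((fun p : Letter × ℤ => if p.1 = Letter.E then some p.2 else none) ∘
        fun p : Letter × ℤ => (p.1, p.2 + wt (b:ℤ) (-(a:ℤ)) p.1)) ∘
        fun y : ℕ => (Letter.N, nv a b π y)) = [] := by
    apply List.filterMap_eq_nil_iff.mpr
    intro y _
    simp [wt]
  rw [h1, List.nil_append]
  have h2 : ∀ x : ℕ, (((fun p : Letter × ℤ => if p.1 = Letter.E then some p.2 else none) ∘
        fun p : Letter × ℤ => (p.1, p.2 + wt (b:ℤ) (-(a:ℤ)) p.1)) ∘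
        fun x : ℕ => (Letter.E, ev a b π x)) x = some (ev a b π x - (a:ℤ)) := by
    intro x
    simp [wt, sub_eq_add_neg]
  calc (List.range b).filterMap _
      = (List.range b).filterMap (fun x : ℕ => some (ev a b π x - (a:ℤ))) :=
        List.filterMap_congr (fun x _ => h2 x)
    _ = (List.range b).map (fun x : ℕ => ev a b π x - (a:ℤ)) :=
        congrFun (List.filterMap_eq_map (f := _)) _

def Rj (a b : ℕ) (π : List ℕ) (j : ℕ) : ℕ :=
  (List.range b).countP (fun x => decide (j + 1 ≤ gGM a b π (ev a b π x - (a:ℤ))))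

lemma cols_filter_len (hπ : IsPtnIn a b π) (j : ℕ) :
    (((bGens a b π).map (gGM a b π)).filter (fun c => decide (j+1 ≤ c))).length
      = Rj a b π j := by
  rw [← List.countP_eq_length_filter, List.countP_map,
    List.Perm.countP_eq _ (bGens_perm hπ), List.countP_map]
  rfl

lemma Rj_antitone {j j' : ℕ} (h : j ≤ j') : Rj a b π j' ≤ Rj a b π j := by
  apply List.countP_mono_left
  intro x _ hx
  have := of_decide_eq_true hx
  exact decide_eq_true (by omega)

lemma Rj_le_b (j : ℕ) : Rj a b π j ≤ b := by
  have := List.countP_le_length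
    (l := List.range b)
    (p := fun x => decide (j + 1 ≤ gGM a b π (ev a b π x - (a:ℤ))))
  rwa [List.length_range] at this

lemma antitone_filter_map_range (f : ℕ → ℕ) : ∀ (n : ℕ), (∀ i j, i ≤ j → j < n → f j ≤ f i) →
    ∃ m ≤ n, ((List.range n).map f).filter (fun t => decide (0 < t)) = (List.range m).map f
      ∧ ∀ j, m ≤ j → j < n → f j = 0
  | 0, _ => ⟨0, le_refl 0, by simp, by omega⟩
  | n+1, hf => by
    by_cases hn : 0 < f n
    · refine ⟨n+1, le_refl _, ?_, by omega⟩
      apply List.filter_eq_self.mpr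
      intro t ht
      obtain ⟨i, hi, rfl⟩ := List.mem_map.mp ht
      have hi' := List.mem_range.mp hi
      have : f n ≤ f i := hf i n (by omega) (by omega)
      exact decide_eq_true (by omega)
    · obtain ⟨m, hm, hfil, hzero⟩ :=
        antitone_filter_map_range f n (fun i j hij hj => hf i j hij (by omega))
      refine ⟨m, by omega, ?_, ?_⟩
      · rw [List.range_succ, List.map_append, List.filter_append, hfil]
        simp [hn]
      · intro j hmj hj
        rcases Nat.lt_or_ge j n with h' | h'
        · exact hzero j hmj h'
        · have : j = n := by omega
          subst this
          omega

lemma GMpart_struct (hπ : IsPtnIn a b π) :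
    ∃ m ≤ a, GMpart a b π = (List.range m).map (Rj a b π)
      ∧ ∀ j, m ≤ j → j < a → Rj a b π j = 0 := by
  have h : GMpart a b π = ((List.range a).map (Rj a b π)).filter (fun t => decide (0 < t)) := by
    rw [GMpart]
    congr 1
    apply List.map_congr_left
    intro j _
    exact cols_filter_len hπ j
  rw [h]
  exact antitone_filter_map_range _ a (fun i j hij _ => Rj_antitone hij)

lemma Qlist_length' {lam : List ℕ} (h : lam.length ≤ a) : (Qlist a lam).length = a := by
  simp [Qlist]
  omega

lemma Qlam_getD (hπ : IsPtnIn a b π) {i : ℕ} (hi : i < a) :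
    (Qlist a (GMpart a b π)).getD i 0 = Rj a b π (a - 1 - i) := by
  obtain ⟨m, hma, heq, hzero⟩ := GMpart_struct hπ
  have hlen : (GMpart a b π).length = m := by rw [heq, List.length_map, List.length_range]
  have hpad : ∀ j, j < a →
      ((GMpart a b π ++ List.replicate (a - (GMpart a b π).length) 0)).getD j 0
        = Rj a b π j := by
    intro j hj
    rcases Nat.lt_or_ge j m with h' | h'
    · rw [List.getD_append _ _ _ _ (by omega), heq,
        List.getD_eq_getElem _ _ (by simpa using h')]
      simp
    · rw [List.getD_append_right _ _ _ _ (by omega), hlen]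
      rw [getD_replicate' 0 (a - m) (j - m)]
      exact (hzero j h' hj).symm
  have hplen : (GMpart a b π ++ List.replicate (a - (GMpart a b π).length) 0).length = a := by
    simp
    omega
  rw [Qlist, getD_reverse' _ _ _ (by rw [hplen]; omega), hplen]
  exact hpad (a - 1 - i) (by omega)

end GMside

section Sorting

lemma posBefore_trans (k k' k'' : ℤ) (h1 : posBefore k k' = true) (h2 : posBefore k' k'' = true) :
    posBefore k k'' = true := by
  unfold posBefore at *
  split_ifs at * <;> simp_all <;> omega

lemma posBefore_total (k k' : ℤ) : (posBefore k k' || posBefore k' k) = true := by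
  unfold posBefore
  split_ifs <;> simp_all <;> omega

lemma posBefore_nonpos {k k' : ℤ} (h1 : k ≤ 0) (h2 : k' ≤ 0) :
    posBefore k k' = true ↔ k' ≤ k := by
  unfold posBefore
  split_ifs <;> simp_all

lemma countP_lt_getElem (l : List (Letter × ℤ)) (hs : l.Pairwise (fun p q => p.2 < q.2))
    {k : ℕ} (hk : k < l.length) :
    l.countP (fun q => decide (q.2 < (l[k]).2)) = k := by
  have hg := List.pairwise_iff_getElem.mp hs
  set K := (l[k]).2 with hK
  have hsplit : l.countP (fun q => decide (q.2 < K))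
      = (l.take k).countP (fun q => decide (q.2 < K))
        + (l.drop k).countP (fun q => decide (q.2 < K)) := by
    conv_lhs => rw [← List.take_append_drop k l]
    rw [List.countP_append]
  have h1 : (l.take k).countP (fun q => decide (q.2 < K)) = k := by
    have hlen : (l.take k).length = k := by rw [List.length_take]; omega
    rw [List.countP_eq_length_filter, List.filter_eq_self.mpr, hlen]
    intro p hp
    obtain ⟨i, hi, rfl⟩ := List.mem_iff_getElem.mp hp
    rw [List.getElem_take]
    have hik : i < k := by
      have := List.length_take (i := k) (l := l)
      omega
    exact decide_eq_true (hg i k (by omega) hk hik)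
  have h2 : (l.drop k).countP (fun q => decide (q.2 < K)) = 0 := by
    rw [List.countP_eq_zero]
    intro p hp
    obtain ⟨i, hi, rfl⟩ := List.mem_iff_getElem.mp hp
    rw [List.getElem_drop]
    intro hcon
    rcases Nat.eq_zero_or_pos i with rfl | hipos
    · simp only [Nat.add_zero] at hcon
      have hlt := of_decide_eq_true hcon
      exact absurd hlt (lt_irrefl _)
    · have hlt := of_decide_eq_true hcon
      have hkk : k < k + i := by omega
      have hbd : k + i < l.length := by
        have := List.length_drop (i := k) (l := l)
        omega
      have := hg k (k + i) hk hbd hkk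
      exact absurd (this.trans hlt) (lt_irrefl _)
  omega

lemma getElem_of_mem_strict {l : List (Letter × ℤ)} (hs : l.Pairwise (fun p q => p.2 < q.2))
    {p : Letter × ℤ} (hp : p ∈ l) :
    ∃ (h : l.countP (fun q => decide (q.2 < p.2)) < l.length),
      l[l.countP (fun q => decide (q.2 < p.2))] = p := by
  obtain ⟨k, hk, rfl⟩ := List.mem_iff_getElem.mp hp
  rw [countP_lt_getElem l hs hk]
  exact ⟨hk, rfl⟩

end Sorting

section Final

variable {a b : ℕ} {π : List ℕ}

lemma PL_length : (PL a b π).length = a + b := by simp [PL]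

lemma sortedP_pairwise (ha : 0 < a) (hb : 0 < b) (hab : Nat.Coprime a b) (hπ : IsPtnIn a b π) :
    ((PL a b π).mergeSort (fun p q => decide (p.2 ≤ q.2))).Pairwise
      (fun p q : Letter × ℤ => p.2 < q.2) := by
  have hperm := List.mergeSort_perm (PL a b π) (fun p q : Letter × ℤ => decide (p.2 ≤ q.2))
  have hpw := List.pairwise_mergeSort (le := fun p q : Letter × ℤ => decide (p.2 ≤ q.2))
    (fun p q r h1 h2 => decide_eq_true (le_trans (of_decide_eq_true h1) (of_decide_eq_true h2)))
    (fun p q => by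
      rcases le_total p.2 q.2 with h | h
      · simp [h]
      · simp [h])
    (PL a b π)
  have hnod : (((PL a b π).mergeSort (fun p q : Letter × ℤ => decide (p.2 ≤ q.2))).map
      Prod.snd).Nodup :=
    ((hperm.map Prod.snd).nodup_iff).mpr (PL_keys_nodup ha hb hab hπ)
  have hne := (List.pairwise_map (f := Prod.snd)
    (R := fun x y : ℤ => x ≠ y)).mp hnod
  exact (hpw.and hne).imp (fun h => lt_of_le_of_ne (of_decide_eq_true h.1) h.2)

lemma wsum_mkwd (hπ : IsPtnIn a b π) : wsum (b:ℤ) (-(a:ℤ)) (mkwd a b π) = 0 := by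
  have h1 : (mkwd a b π).map (wt (b:ℤ) (-(a:ℤ)))
      = (startPairs (b:ℤ) (-(a:ℤ)) 0 (mkwd a b π)).map (fun p => wt (b:ℤ) (-(a:ℤ)) p.1) := by
    conv_lhs => rw [← startPairs_fst (b:ℤ) (-(a:ℤ)) 0 (mkwd a b π)]
    rw [List.map_map]
    rfl
  rw [wsum, h1, List.Perm.sum_eq ((SP_mkwd_perm hπ).map _)]
  rw [PL, List.map_append, List.map_map, List.map_map, List.sum_append]
  have h2 : ((List.range a).map ((fun p : Letter × ℤ => wt (b:ℤ) (-(a:ℤ)) p.1) ∘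
      (fun y : ℕ => (Letter.N, nv a b π y)))).sum = (a:ℤ) * (b:ℤ) := by
    have : ((fun p : Letter × ℤ => wt (b:ℤ) (-(a:ℤ)) p.1) ∘
        (fun y : ℕ => (Letter.N, nv a b π y))) = Function.const ℕ (b:ℤ) := rfl
    rw [this, List.map_const, List.sum_replicate, List.length_range]
    simp [mul_comm]
  have h3 : ((List.range b).map ((fun p : Letter × ℤ => wt (b:ℤ) (-(a:ℤ)) p.1) ∘
      (fun x : ℕ => (Letter.E, ev a b π x)))).sum = -((b:ℤ) * (a:ℤ)) := by
    have : ((fun p : Letter × ℤ => wt (b:ℤ) (-(a:ℤ)) p.1) ∘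
        (fun x : ℕ => (Letter.E, ev a b π x))) = Function.const ℕ (-(a:ℤ)) := rfl
    rw [this, List.map_const, List.sum_replicate, List.length_range]
    simp [mul_comm]
  rw [h2, h3]
  ring

lemma sweep_eq_sorted (ha : 0 < a) (hb : 0 < b) (hab : Nat.Coprime a b)
    (hπ : IsPtnIn a b π) (hD : IsDyckPtn a b π) :
    sweepPos (b:ℤ) (-(a:ℤ)) ((mkwd a b π).reverse)
      = ((PL a b π).mergeSort (fun p q => decide (p.2 ≤ q.2))).map Prod.fst := by
  have hperm := List.mergeSort_perm (PL a b π) (fun p q : Letter × ℤ => decide (p.2 ≤ q.2))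
  set SL := (PL a b π).mergeSort (fun p q : Letter × ℤ => decide (p.2 ≤ q.2)) with hSL
  set M : List (Letter × ℤ) := SL.map (fun p => (p.1, -p.2)) with hM
  have hLR : lvls (b:ℤ) (-(a:ℤ)) 0 ((mkwd a b π).reverse)
      = ((startPairs (b:ℤ) (-(a:ℤ)) 0 (mkwd a b π)).map
          (fun p => (p.1, wsum (b:ℤ) (-(a:ℤ)) (mkwd a b π) - p.2))).reverse :=
    lvls_reverse _ _ _
  rw [wsum_mkwd hπ] at hLR
  have hzs : ∀ p : Letter × ℤ, ((0:ℤ) - p.2) = -p.2 := fun p => by ring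
  have hLR2 : lvls (b:ℤ) (-(a:ℤ)) 0 ((mkwd a b π).reverse)
      = ((startPairs (b:ℤ) (-(a:ℤ)) 0 (mkwd a b π)).map (fun p => (p.1, -p.2))).reverse := by
    rw [hLR]
    congr 1
    apply List.map_congr_left
    intro p _
    rw [hzs p]
  -- the permutation chain
  have hchain : (lvls (b:ℤ) (-(a:ℤ)) 0 ((mkwd a b π).reverse)).Perm M := by
    rw [hLR2]
    refine (List.reverse_perm _).trans ?_
    refine ((SP_mkwd_perm hπ).map _).trans ?_
    exact (hperm.symm.map _)
  have hpermfull : ((lvls (b:ℤ) (-(a:ℤ)) 0 ((mkwd a b π).reverse)).mergeSort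
      (fun p q => posBefore p.2 q.2)).Perm M :=
    (List.mergeSort_perm _ _).trans hchain
  -- sortedness of both sides wrt strict descending keys
  have hr : IsAntisymm (Letter × ℤ) (fun p q => q.2 < p.2) :=
    ⟨fun p q h h' => absurd (h.trans h') (lt_irrefl _)⟩
  have hMsorted : M.Pairwise (fun p q : Letter × ℤ => q.2 < p.2) := by
    rw [hM, List.pairwise_map]
    exact (sortedP_pairwise ha hb hab hπ).imp (fun h => by simpa using h)
  have hLsorted : ((lvls (b:ℤ) (-(a:ℤ)) 0 ((mkwd a b π).reverse)).mergeSort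
      (fun p q => posBefore p.2 q.2)).Pairwise (fun p q : Letter × ℤ => q.2 < p.2) := by
    have hpw := List.pairwise_mergeSort (le := fun p q : Letter × ℤ => posBefore p.2 q.2)
      (fun p q r h1 h2 => posBefore_trans _ _ _ h1 h2)
      (fun p q => posBefore_total _ _)
      (lvls (b:ℤ) (-(a:ℤ)) 0 ((mkwd a b π).reverse))
    have hnonpos : ∀ p ∈ (lvls (b:ℤ) (-(a:ℤ)) 0 ((mkwd a b π).reverse)).mergeSort
        (fun p q => posBefore p.2 q.2), p.2 ≤ 0 := by
      intro p hp
      have hp2 : p ∈ M := hpermfull.mem_iff.mp hp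
      rw [hM] at hp2
      obtain ⟨q, hq, rfl⟩ := List.mem_map.mp hp2
      have hq2 : q ∈ PL a b π := hperm.mem_iff.mp hq
      have := PL_nonneg hπ hD q hq2
      simpa using this
    have hnod : (((lvls (b:ℤ) (-(a:ℤ)) 0 ((mkwd a b π).reverse)).mergeSort
        (fun p q => posBefore p.2 q.2)).map Prod.snd).Nodup := by
      refine ((hpermfull.map Prod.snd).nodup_iff).mpr ?_
      rw [hM, List.map_map]
      have : (Prod.snd ∘ fun p : Letter × ℤ => (p.1, -p.2)) = (fun z : ℤ => -z) ∘ Prod.snd :=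
        rfl
      rw [this, ← List.map_map]
      exact List.Nodup.map neg_injective
        (((hperm.map Prod.snd).nodup_iff).mpr (PL_keys_nodup ha hb hab hπ))
    have hne := (List.pairwise_map (f := Prod.snd) (R := fun x y : ℤ => x ≠ y)).mp hnod
    refine ((hpw.and hne).imp_of_mem ?_)
    intro p q hpm hqm h
    have h1 := (posBefore_nonpos (hnonpos p hpm) (hnonpos q hqm)).mp h.1
    exact lt_of_le_of_ne h1 (fun he => h.2 he.symm)
  have heq := List.Perm.eq_of_pairwise (fun p q _ _ h h' => absurd (h.trans h') (lt_irrefl _)) hLsorted hMsorted hpermfull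
  rw [sweepPos, heq, hM, List.map_map]
  rfl

end Final

section Last

variable {a b : ℕ} {π : List ℕ}

lemma dN_bridge (ha : 0 < a) (hb : 0 < b) (hab : Nat.Coprime a b)
    (hπ : IsPtnIn a b π) (hD : IsDyckPtn a b π) {x : ℕ} (hx : x < b) :
    gGM a b π (ev a b π x - (a:ℤ)) = dN a b π x := by
  rw [key_g ha hb hab hπ hD hx, countP_range_card]
  rfl

lemma match_Rj (ha : 0 < a) (hb : 0 < b) (hab : Nat.Coprime a b)
    (hπ : IsPtnIn a b π) (hD : IsDyckPtn a b π) {Y : ℕ} (hY : Y < a) :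
    Rj a b π (a - 1 - rkN a b π Y) = cE a b π Y := by
  have hrk := rkN_lt_a (π := π) ha hab hY
  have h1 : Rj a b π (a - 1 - rkN a b π Y)
      = (List.range b).countP (fun x => decide (a - rkN a b π Y ≤ dN a b π x)) := by
    rw [Rj]
    apply List.countP_congr
    intro x hx
    have hx' := List.mem_range.mp hx
    rw [dN_bridge ha hb hab hπ hD hx']
    simp only [decide_eq_true_eq]
    omega
  rw [h1, match_count ha hb hab hπ hY]

lemma PL_countP_split (K : ℤ) :
    (PL a b π).countP (fun q => decide (q.2 < K))
      = (List.range a).countP (fun y => decide (nv a b π y < K))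
        + (List.range b).countP (fun x => decide (ev a b π x < K)) := by
  rw [PL, List.countP_append, List.countP_map, List.countP_map]
  rfl

lemma sorted_fst_N_iff (ha : 0 < a) (hb : 0 < b) (hab : Nat.Coprime a b)
    (hπ : IsPtnIn a b π) (hD : IsDyckPtn a b π) {k : ℕ}
    (hk : k < ((PL a b π).mergeSort (fun p q => decide (p.2 ≤ q.2))).length) :
    ((((PL a b π).mergeSort (fun p q => decide (p.2 ≤ q.2)))[k]'hk).1 = Letter.N
      ↔ ∃ i < a, k = (Qlist a (GMpart a b π)).getD i 0 + i) := by
  have hperm := List.mergeSort_perm (PL a b π) (fun p q : Letter × ℤ => decide (p.2 ≤ q.2))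
  set SL := (PL a b π).mergeSort (fun p q : Letter × ℤ => decide (p.2 ≤ q.2)) with hSL
  have hs := sortedP_pairwise ha hb hab hπ
  have hcnt := countP_lt_getElem _ hs hk
  constructor
  · intro hN
    have hmem : SL[k] ∈ PL a b π := hperm.mem_iff.mp (List.getElem_mem hk)
    rw [PL, List.mem_append] at hmem
    rcases hmem with hm | hm
    · obtain ⟨Y, hYr, hYe⟩ := List.mem_map.mp hm
      have hY := List.mem_range.mp hYr
      refine ⟨rkN a b π Y, rkN_lt_a ha hab hY, ?_⟩
      rw [Qlam_getD hπ (rkN_lt_a ha hab hY), match_Rj ha hb hab hπ hD hY]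
      have h2 : (PL a b π).countP (fun q => decide (q.2 < (SL[k]'hk).2)) = k := by
        rw [← List.Perm.countP_eq _ hperm]
        exact hcnt
      have hK : (SL[k]'hk).2 = nv a b π Y := by rw [← hYe]
      rw [hK, PL_countP_split] at h2
      have e1 : rkN a b π Y
          = (List.range a).countP (fun y => decide (nv a b π y < nv a b π Y)) := rfl
      have e2 : cE a b π Y
          = (List.range b).countP (fun x => decide (ev a b π x < nv a b π Y)) := rfl
      omega
    · obtain ⟨X, hXr, hXe⟩ := List.mem_map.mp hm
      rw [← hXe] at hN
      exact absurd hN (by simp)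
  · rintro ⟨i, hia, hki⟩
    obtain ⟨Y, hY, hrk⟩ := rkN_surj (π := π) ha hab hia
    have hpY : (Letter.N, nv a b π Y) ∈ PL a b π :=
      List.mem_append_left _ (List.mem_map.mpr ⟨Y, List.mem_range.mpr hY, rfl⟩)
    have hpYS : (Letter.N, nv a b π Y) ∈ SL := hperm.mem_iff.mpr hpY
    obtain ⟨hlt, hel⟩ := getElem_of_mem_strict hs hpYS
    have hidx : SL.countP (fun q => decide (q.2 < ((Letter.N, nv a b π Y) : Letter × ℤ).2)) = k := by
      rw [List.Perm.countP_eq _ hperm, PL_countP_split]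
      have e1 : rkN a b π Y
          = (List.range a).countP (fun y => decide (nv a b π y < nv a b π Y)) := rfl
      have e2 : cE a b π Y
          = (List.range b).countP (fun x => decide (ev a b π x < nv a b π Y)) := rfl
      have e1 : (List.range a).countP
          (fun y => decide (nv a b π y < ((Letter.N, nv a b π Y) : Letter × ℤ).2))
          = rkN a b π Y := rfl
      have e2 : (List.range b).countP
          (fun x => decide (ev a b π x < ((Letter.N, nv a b π Y) : Letter × ℤ).2))
          = cE a b π Y := rfl
      rw [e1, e2]
      have h3 := Qlam_getD hπ hia
      have h4 := match_Rj ha hb hab hπ hD hY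
      rw [hrk] at h4
      omega
    simp only [hidx] at hel
    have : (SL[k]'hk) = (Letter.N, nv a b π Y) := by rw [← hel]; congr 1; exact hidx.symm
    rw [this]

end Last

/-- For coprime positive `a`, `b` and every `(b,-a)`-Dyck partition `π` in the
    `a×b` rectangle, `mkwd(G_{b,a}(π)) = sw⁺_{b,-a} ∘ rev (mkwd(π))`, where
    `G_{b,a}` is the Gorsky–Mazin map. -/
theorem mkwd_GM_eq_sweep (a b : ℕ) (ha : 0 < a) (hb : 0 < b) (hab : Nat.Coprime a b)
    (π : List ℕ) (hπ : IsPtnIn a b π) (hD : IsDyckPtn a b π) :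
    mkwd a b (GMpart a b π) =
      sweepPos (b : ℤ) (-(a : ℤ)) ((mkwd a b π).reverse) := by
  rw [sweep_eq_sorted ha hb hab hπ hD]
  have hperm := List.mergeSort_perm (PL a b π) (fun p q : Letter × ℤ => decide (p.2 ≤ q.2))
  set SL := (PL a b π).mergeSort (fun p q : Letter × ℤ => decide (p.2 ≤ q.2)) with hSL
  obtain ⟨m, hma, hGM, hzero⟩ := GMpart_struct hπ
  have hlamlen : (GMpart a b π).length ≤ a := by
    rw [hGM, List.length_map, List.length_range]
    omega
  have hQlen : (Qlist a (GMpart a b π)).length = a := Qlist_length' hlamlen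
  have hQpw : (Qlist a (GMpart a b π)).Pairwise (· ≤ ·) := by
    rw [List.pairwise_iff_getElem]
    intro i j hi hj hij
    rw [hQlen] at hi hj
    rw [← List.getD_eq_getElem _ 0 (by rw [hQlen]; exact hi),
      ← List.getD_eq_getElem _ 0 (by rw [hQlen]; exact hj),
      Qlam_getD hπ hi, Qlam_getD hπ hj]
    exact Rj_antitone (by omega)
  have hQle : ∀ q ∈ Qlist a (GMpart a b π), q ≤ b := by
    intro q hq
    obtain ⟨i, hi, rfl⟩ := List.mem_iff_getElem.mp hq
    rw [← List.getD_eq_getElem _ 0 hi, Qlam_getD hπ (by rw [← hQlen]; exact hi)]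
    exact Rj_le_b _
  have hlen1 : (mkwd a b (GMpart a b π)).length = b + a := by
    rw [mkwd_eq_stairs,
      stairs_length b _ 0 hQpw (fun q _ => Nat.zero_le q) hQle (Nat.zero_le b), hQlen]
    omega
  have hlen2 : (SL.map Prod.fst).length = a + b := by
    rw [List.length_map, hperm.length_eq, PL_length]
  apply List.ext_getElem (by omega)
  intro k h1 h2
  have hiff1 : (mkwd a b (GMpart a b π))[k] = Letter.N
      ↔ ∃ i < a, k = (Qlist a (GMpart a b π)).getD i 0 + i := by
    rw [← List.getD_eq_getElem _ Letter.E h1, mkwd_eq_stairs]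
    rw [stairs_getD b (Qlist a (GMpart a b π)) 0 k hQpw (fun q _ => Nat.zero_le q)]
    simp only [hQlen, Nat.add_zero]
  have hkSL : k < SL.length := by
    rw [hperm.length_eq, PL_length]
    omega
  have hiff2 : (SL.map Prod.fst)[k] = Letter.N
      ↔ ∃ i < a, k = (Qlist a (GMpart a b π)).getD i 0 + i := by
    rw [List.getElem_map]
    exact sorted_fst_N_iff ha hb hab hπ hD hkSL
  rcases hA : (mkwd a b (GMpart a b π))[k] with _ | _
    <;> rcases hB : (SL.map Prod.fst)[k] with _ | _
  · rfl
  · exact absurd (hiff2.mpr (hiff1.mp hA)) (by rw [hB]; simp)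
  · exact absurd (hiff1.mpr (hiff2.mp hB)) (by rw [hA]; simp)
  · rfl
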